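/- For every integer r ≥ 1 there exists a constant C > 0 such that the following holds: for every prime power q, all positive integers k1 ≤ q − 1, z ≥ 1, and d ≥ 1 with r·d·(k1 − 1) < q − 1 − z, and every positive integer n ≤ q^{k1}, there exists a t × n binary (d, r; z]-disjunct matrix with t ≤ C·q^{r+1}. -/

import Mathlib

open Polynomial Finset

lemma aux_roots {F : Type*} [Field F] [Fintype F] [DecidableEq F] (k1 : ℕ)
    (a : Fin k1 → F) (ha : a ≠ 0) :
    (Finset.univ.filter fun x : F => ∑ i : Fin k1, a i * x ^ (i : ℕ) = 0).card ≤ k1 - 1 := by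
  set p : F[X] := ∑ i : Fin k1, Polynomial.C (a i) * Polynomial.X ^ (i : ℕ) with hp
  have hcoeff : ∀ i : Fin k1, p.coeff i = a i := by
    intro i
    rw [hp, Polynomial.finset_sum_coeff, Finset.sum_eq_single i]
    · simp
    · intro b _ hb
      rw [Polynomial.coeff_C_mul, Polynomial.coeff_X_pow, if_neg, mul_zero]
      exact fun h => hb (Fin.ext h.symm)
    · simp
  have hpne : p ≠ 0 := by
    obtain ⟨i, hi⟩ := Function.ne_iff.mp ha
    intro h
    apply hi
    have := hcoeff i
    rw [h] at this
    simpa using this.symm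
  have hdeg : p.natDegree ≤ k1 - 1 := by
    apply Polynomial.natDegree_sum_le_of_forall_le
    intro i _
    calc (Polynomial.C (a i) * Polynomial.X ^ (i : ℕ)).natDegree
        ≤ (Polynomial.X ^ (i : ℕ) : F[X]).natDegree := Polynomial.natDegree_C_mul_le _ _
      _ ≤ k1 - 1 := by rw [Polynomial.natDegree_X_pow]; omega
  have hsub : (Finset.univ.filter fun x : F => ∑ i : Fin k1, a i * x ^ (i : ℕ) = 0)
      ⊆ p.roots.toFinset := by
    intro x hx
    simp only [Finset.mem_filter] at hx
    rw [Multiset.mem_toFinset, Polynomial.mem_roots hpne]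
    show p.eval x = 0
    rw [hp]
    simpa [Polynomial.eval_finset_sum] using hx.2
  calc _ ≤ p.roots.toFinset.card := Finset.card_le_card hsub
    _ ≤ Multiset.card p.roots := Multiset.toFinset_card_le _
    _ ≤ p.natDegree := Polynomial.card_roots' p
    _ ≤ k1 - 1 := hdeg



/-- An `m × n` binary matrix `M` is `(d, r; z]`-disjunct if for every pair of disjoint
sets `S1`, `S2` of column indices with `|S1| = d` and `|S2| = r`, there are at least `z`
rows in which every column indexed by `S2` has entry 1 and every column indexed by `S1`
has entry 0. -/
def Disjunct (m n d r z : ℕ) (M : Fin m → Fin n → Bool) : Prop :=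
  ∀ S1 S2 : Finset (Fin n), Disjoint S1 S2 → S1.card = d → S2.card = r →
    z ≤ (Finset.univ.filter fun i : Fin m =>
      (∀ j ∈ S2, M i j = true) ∧ ∀ j ∈ S1, M i j = false).card

/-- for every `r ≥ 1` there is a constant `C > 0` such that for every
prime power `q`, positive integers `k1 ≤ q − 1`, `z`, `d` with
`r·d·(k1 − 1) < q − 1 − z`, and every positive integer `n ≤ q^{k1}`, there exists a
`t × n` binary `(d, r; z]`-disjunct matrix with `t ≤ C·q^{r+1}`. -/
theorem rs_disjunct_exists (r : ℕ) (hr : 1 ≤ r) :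
    ∃ C : ℝ, 0 < C ∧ ∀ q k1 z d n : ℕ, IsPrimePow q →
      0 < k1 → k1 ≤ q - 1 → 0 < z → 0 < d →
      r * d * (k1 - 1) < q - 1 - z →
      0 < n → n ≤ q ^ k1 →
      ∃ t : ℕ, ∃ M : Fin t → Fin n → Bool, Disjunct t n d r z M ∧
        (t : ℝ) ≤ C * (q : ℝ) ^ (r + 1) := by
  classical
  refine ⟨1, one_pos, ?_⟩
  intro q k1 z d n hq hk1 hk1q hz hd hlt hn hnq
  obtain ⟨p, m, hp, hm, rfl⟩ := hq
  haveI : Fact p.Prime := ⟨hp.nat_prime⟩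
  set F := GaloisField p m with hF
  haveI : Fintype F := Fintype.ofFinite F
  have hcardF : Fintype.card F = p ^ m := by
    rw [← Nat.card_eq_fintype_card]; exact GaloisField.card p m hm.ne'
  -- embedding of columns into coefficient vectors
  have hcards : n ≤ Fintype.card (Fin n) := by simp
  have hemb : Nonempty (Fin n ↪ (Fin k1 → F)) := by
    apply Function.Embedding.nonempty_of_card_le
    rw [Fintype.card_fun, hcardF, Fintype.card_fin, Fintype.card_fin]
    exact hnq
  obtain ⟨ι⟩ := hemb
  -- codewords
  set c : Fin n → F → F := fun j x => ∑ i : Fin k1, ι j i * x ^ (i : ℕ) with hc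
  set t : ℕ := (p ^ m) ^ (r + 1) with ht
  have hcardrows : Fintype.card (F × (Fin r → F)) = t := by
    rw [Fintype.card_prod, Fintype.card_fun, hcardF, Fintype.card_fin, ht, pow_succ]
    ring
  set e : Fin t ≃ F × (Fin r → F) := (Fintype.equivFinOfCardEq hcardrows).symm with he
  set M : Fin t → Fin n → Bool :=
    fun i j => if ∃ l : Fin r, c j (e i).1 = (e i).2 l then true else false with hM
  have key : ∀ j j' : Fin n, j ≠ j' →
      (Finset.univ.filter fun x : F => c j x = c j' x).card ≤ k1 - 1 := by
    intro j j' hjj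
    have hne : (fun i => ι j i - ι j' i) ≠ 0 := by
      intro h
      apply hjj
      apply ι.injective
      funext i
      have := congrFun h i
      simpa [sub_eq_zero] using this
    have hfe : (Finset.univ.filter fun x : F => c j x = c j' x)
        = Finset.univ.filter fun x : F =>
            ∑ i : Fin k1, (ι j i - ι j' i) * x ^ (i : ℕ) = 0 := by
      apply Finset.filter_congr
      intro x _
      rw [← sub_eq_zero]
      simp [hc, Finset.sum_sub_distrib, sub_mul]
    rw [hfe]
    exact aux_roots k1 _ hne
  refine ⟨t, M, ?_, ?_⟩
  · intro S1 S2 hdisj hc1 hc2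
    set gg : Fin r → Fin n := fun l => (S2.orderIsoOfFin hc2 l : Fin n) with hgg
    have hggS2 : ∀ l, gg l ∈ S2 := fun l => (S2.orderIsoOfFin hc2 l).2
    set Bad : Finset F :=
      Finset.univ.filter fun x => ∃ j ∈ S1, ∃ l : Fin r, c j x = c (gg l) x with hBadDef
    have hBad : Bad.card ≤ d * (r * (k1 - 1)) := by
      have hsub : Bad ⊆ S1.biUnion fun j => (Finset.univ : Finset (Fin r)).biUnion
          fun l => Finset.univ.filter fun x => c j x = c (gg l) x := by
        intro x hx
        simp only [hBadDef, Finset.mem_filter, Finset.mem_biUnion] at hx ⊢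
        obtain ⟨-, j, hj, l, hl⟩ := hx
        exact ⟨j, hj, l, Finset.mem_univ l, by simp [hl]⟩
      calc Bad.card ≤ _ := Finset.card_le_card hsub
        _ ≤ ∑ j ∈ S1, ((Finset.univ : Finset (Fin r)).biUnion
            fun l => Finset.univ.filter fun x => c j x = c (gg l) x).card :=
          Finset.card_biUnion_le
        _ ≤ ∑ _j ∈ S1, r * (k1 - 1) := by
            apply Finset.sum_le_sum
            intro j hj
            calc _ ≤ ∑ l : Fin r,
                  (Finset.univ.filter fun x => c j x = c (gg l) x).card :=
                Finset.card_biUnion_le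
              _ ≤ ∑ _l : Fin r, (k1 - 1) := by
                  apply Finset.sum_le_sum
                  intro l _
                  apply key
                  intro hjg
                  exact Finset.disjoint_left.mp hdisj hj (hjg ▸ hggS2 l)
              _ = r * (k1 - 1) := by simp [Finset.sum_const, mul_comm]
        _ = d * (r * (k1 - 1)) := by rw [Finset.sum_const, hc1, smul_eq_mul]
    set Good : Finset F :=
      Finset.univ.filter fun x => ¬ ∃ j ∈ S1, ∃ l : Fin r, c j x = c (gg l) x with hGoodDef
    have hsplit : Bad.card + Good.card = p ^ m := by
      rw [hBadDef, hGoodDef, Finset.card_filter_add_card_filter_not,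
        Finset.card_univ, hcardF]
    have hGood : z ≤ Good.card := by
      have harith : d * (r * (k1 - 1)) = r * d * (k1 - 1) := by ring
      omega
    refine le_trans hGood (Finset.card_le_card_of_injOn
      (fun x => e.symm (x, fun l => c (gg l) x)) ?_ ?_)
    · intro x hx
      simp only [hGoodDef, Finset.mem_coe, Finset.mem_filter] at hx
      have hex : e (e.symm (x, fun l => c (gg l) x)) = (x, fun l => c (gg l) x) :=
        Equiv.apply_symm_apply _ _
      simp only [Finset.mem_coe, Finset.mem_filter, Finset.mem_univ, true_and]
      constructor
      · intro j hj
        obtain ⟨l, hl⟩ : ∃ l, gg l = j := by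
          obtain ⟨l, hl⟩ := (S2.orderIsoOfFin hc2).surjective ⟨j, hj⟩
          exact ⟨l, congrArg Subtype.val hl⟩
        simp only [hM, hex]
        rw [if_pos]
        exact ⟨l, by rw [hl]⟩
      · intro j hj
        simp only [hM, hex]
        rw [if_neg]
        rintro ⟨l, hl⟩
        exact hx.2 ⟨j, hj, l, hl⟩
    · intro x _ y _ hxy
      have := congrArg (fun i => (e i).1) hxy
      simpa using this
  · rw [ht]
    push_cast
    rw [one_mul]
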